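/- For m ≥ 4, the set ⟨1,K_m⟩ = {2t_{m-1}, 2t_{m-1}+1, …, k_{m+4}−2} has cardinality k_m − 1; equivalently, k_{m+4} − 2 − 2t_{m-1} + 1 = k_m − 1, i.e. k_{m+4} = 2t_{m-1} + k_m for m ≥ 4. -/
import Mathlib


/-- Tribonacci numbers, index-shifted so that `trib n` represents t_{n-2}:
`trib 0 = t₋₂ = 0`, `trib 1 = t₋₁ = 1`, `trib 2 = t₀ = 1`, and
`trib (n+3) = trib (n+2) + trib (n+1) + trib n`. -/
def trib : ℕ → ℕ
  | 0 => 0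
  | 1 => 1
  | 2 => 1
  | n + 3 => trib (n + 2) + trib (n + 1) + trib n

/-- Kernel numbers: k₀ = 0, k₁ = k₂ = 1, k_m = k_{m-1} + k_{m-2} + k_{m-3} - 1 for m ≥ 3. -/
def ker : ℕ → ℕ
  | 0 => 0
  | 1 => 1
  | 2 => 1
  | n + 3 => ker (n + 2) + ker (n + 1) + ker n - 1

lemma ker_pos : ∀ n, 1 ≤ ker (n + 1) := by
  intro n
  induction n using Nat.strong_induction_on with
  | _ n ih =>
    match n with
    | 0 => decide
    | 1 => decide
    | 2 => decide
    | k + 3 =>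
      have h1 : 1 ≤ ker (k + 3) := ih (k + 2) (by omega)
      have h2 : 1 ≤ ker (k + 2) := ih (k + 1) (by omega)
      have h3 : 1 ≤ ker (k + 1) := ih k (by omega)
      show 1 ≤ ker (k + 3) + ker (k + 2) + ker (k + 1) - 1
      omega

lemma trib_pos : ∀ n, 1 ≤ trib (n + 1) := by
  intro n
  induction n using Nat.strong_induction_on with
  | _ n ih =>
    match n with
    | 0 => decide
    | 1 => decide
    | 2 => decide
    | k + 3 =>
      have h1 : 1 ≤ trib (k + 3) := ih (k + 2) (by omega)
      show 1 ≤ trib (k + 3) + trib (k + 2) + trib (k + 1)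
      omega

lemma key : ∀ n, ker (n + 4) = 2 * trib (n + 1) + ker n := by
  intro n
  induction n using Nat.strong_induction_on with
  | _ n ih =>
    match n with
    | 0 => decide
    | 1 => decide
    | 2 => decide
    | k + 3 =>
      have h1 : ker (k + 6) = 2 * trib (k + 3) + ker (k + 2) := ih (k + 2) (by omega)
      have h2 : ker (k + 5) = 2 * trib (k + 2) + ker (k + 1) := ih (k + 1) (by omega)
      have h3 : ker (k + 4) = 2 * trib (k + 1) + ker k := ih k (by omega)
      have p1 : 1 ≤ ker (k + 4) := ker_pos (k + 3)
      have p2 : 1 ≤ ker (k + 3) := ker_pos (k + 2)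
      have p3 : 1 ≤ ker (k + 2) := ker_pos (k + 1)
      have p4 : 1 ≤ ker (k + 1) := ker_pos k
      have p5 : 1 ≤ ker (k + 5) := ker_pos (k + 4)
      have p6 : 1 ≤ ker (k + 6) := ker_pos (k + 5)
      have e1 : ker (k + 7) = ker (k + 6) + ker (k + 5) + ker (k + 4) - 1 := rfl
      have e2 : ker (k + 3) = ker (k + 2) + ker (k + 1) + ker k - 1 := rfl
      have e3 : trib (k + 4) = trib (k + 3) + trib (k + 2) + trib (k + 1) := rfl
      show ker (k + 7) = 2 * trib (k + 4) + ker (k + 3)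
      omega

/-- For m ≥ 4, the set ⟨1,K_m⟩ = {2t_{m-1}, …, k_{m+4} − 2} has cardinality k_m − 1;
equivalently k_{m+4} = 2t_{m-1} + k_m.  (Here `trib (m+1)` = t_{m-1}.) -/
theorem card_set_one_Km (m : ℕ) (hm : 4 ≤ m) :
    (Finset.Icc (2 * trib (m + 1)) (ker (m + 4) - 2)).card = ker m - 1 ∧
      ker (m + 4) = 2 * trib (m + 1) + ker m := by
  have hk := key m
  have h1 : 1 ≤ ker m := by
    obtain ⟨j, rfl⟩ : ∃ j, m = j + 1 := ⟨m - 1, by omega⟩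
    exact ker_pos j
  have h2 := trib_pos m
  constructor
  · rw [Nat.card_Icc]
    omega
  · exact hk
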